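/- arXiv:2603.24227 — 3 statements merged into one kernel-verified Lean document; each statement's English description precedes it below -/
import Mathlib

section
/- The set C* = { y ∈ ℝ^K : 1^T y ≥ ‖y‖₂ } is the dual cone of C = { y ∈ ℝ_+^K : 1^T y ≥ √(K−1)·‖y‖₂ }, i.e., C* = { y : ∀ x ∈ C, x^T y ≥ 0 }. -/
set_option maxHeartbeats 1000000

open Finset

/-- Centered sum is zero. -/
lemma centered_sum {K : ℕ} (hK : K ≠ 0) (y : Fin K → ℝ) :
    ∑ i, (y i - (∑ j, y j) / K) = 0 := by
  have hKR : (K : ℝ) ≠ 0 := Nat.cast_ne_zero.mpr hK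
  rw [Finset.sum_sub_distrib, Finset.sum_const, Finset.card_univ, Fintype.card_fin,
    nsmul_eq_mul]
  field_simp
  ring

/-- Centered sum of squares. -/
lemma centered_sum_sq {K : ℕ} (hK : K ≠ 0) (y : Fin K → ℝ) :
    ∑ i, (y i - (∑ j, y j) / K) ^ 2 = (∑ i, (y i) ^ 2) - (∑ j, y j) ^ 2 / K := by
  have hKR : (K : ℝ) ≠ 0 := Nat.cast_ne_zero.mpr hK
  have h1 : ∀ i : Fin K, (y i - (∑ j, y j) / K) ^ 2 =
      (y i) ^ 2 - 2 * ((∑ j, y j) / K) * y i + ((∑ j, y j) / K) ^ 2 := by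
    intro i; ring
  rw [Finset.sum_congr rfl fun i _ => h1 i]
  rw [Finset.sum_add_distrib, Finset.sum_sub_distrib, ← Finset.mul_sum,
    Finset.sum_const, Finset.card_univ, Fintype.card_fin, nsmul_eq_mul]
  field_simp
  ring

theorem stmt4 {K : ℕ} (hK : 2 ≤ K) :
    {y : Fin K → ℝ | Real.sqrt (∑ i, (y i) ^ 2) ≤ ∑ i, y i} =
    {y : Fin K → ℝ | ∀ x ∈ {x : Fin K → ℝ | (∀ i, 0 ≤ x i) ∧
        Real.sqrt ((K : ℝ) - 1) * Real.sqrt (∑ i, (x i) ^ 2) ≤ ∑ i, x i},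
      0 ≤ ∑ i, x i * y i} := by
  have hKne : K ≠ 0 := by omega
  have hKR : (0 : ℝ) < K := by exact_mod_cast Nat.pos_of_ne_zero hKne
  have hK1 : (1 : ℝ) < K := by exact_mod_cast hK.trans_lt' one_lt_two
  have hKm1 : (0 : ℝ) < (K : ℝ) - 1 := by linarith
  ext y
  simp only [Set.mem_setOf_eq]
  constructor
  · -- forward: y in C* description → dual cone condition
    intro hy x hxmem
    obtain ⟨hx0, hxc⟩ := hxmem
    set a := ∑ i, x i with ha
    set b := ∑ i, y i with hb
    have hQx : (0:ℝ) ≤ ∑ i, (x i) ^ 2 := by positivity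
    have hQy : (0:ℝ) ≤ ∑ i, (y i) ^ 2 := by positivity
    have hb0 : 0 ≤ b := le_trans (Real.sqrt_nonneg _) hy
    have ha0 : 0 ≤ a := Finset.sum_nonneg fun i _ => hx0 i
    -- squared versions of the hypotheses
    have hy2 : ∑ i, (y i) ^ 2 ≤ b ^ 2 := by
      have h := Real.sq_sqrt hQy
      nlinarith [Real.sqrt_nonneg (∑ i, (y i) ^ 2)]
    have hx2 : ((K:ℝ) - 1) * ∑ i, (x i) ^ 2 ≤ a ^ 2 := by
      have h1 := Real.sq_sqrt hQx
      have h2 := Real.sq_sqrt hKm1.le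
      have hm : (Real.sqrt ((K:ℝ) - 1) * Real.sqrt (∑ i, (x i) ^ 2)) ^ 2 =
          ((K:ℝ) - 1) * ∑ i, (x i) ^ 2 := by rw [mul_pow, h1, h2]
      nlinarith [hm, hxc, ha0,
        mul_nonneg (Real.sqrt_nonneg ((K:ℝ) - 1)) (Real.sqrt_nonneg (∑ i, (x i) ^ 2))]
    -- centered vectors
    set u : Fin K → ℝ := fun i => x i - a / K with hu
    set v : Fin K → ℝ := fun i => y i - b / K with hv
    have hu2 : ∑ i, (u i) ^ 2 = (∑ i, (x i) ^ 2) - a ^ 2 / K := centered_sum_sq hKne x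
    have hv2 : ∑ i, (v i) ^ 2 = (∑ i, (y i) ^ 2) - b ^ 2 / K := centered_sum_sq hKne y
    have hu2n : (0:ℝ) ≤ ∑ i, (u i) ^ 2 := by positivity
    have hv2n : (0:ℝ) ≤ ∑ i, (v i) ^ 2 := by positivity
    -- Cauchy-Schwarz
    have cs := Finset.sum_mul_sq_le_sq_mul_sq Finset.univ u v
    -- clear denominators
    have f1 : (K:ℝ) * (∑ i, (u i) ^ 2) = K * (∑ i, (x i) ^ 2) - a ^ 2 := by
      rw [hu2]; field_simp
    have f2 : (K:ℝ) * (∑ i, (v i) ^ 2) = K * (∑ i, (y i) ^ 2) - b ^ 2 := by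
      rw [hv2]; field_simp
    have g1 : ((K:ℝ) - 1) * ((K:ℝ) * (∑ i, (u i) ^ 2)) ≤ a ^ 2 := by
      rw [f1]
      nlinarith [mul_le_mul_of_nonneg_left hx2 hKR.le]
    have g2 : (K:ℝ) * (∑ i, (v i) ^ 2) ≤ ((K:ℝ) - 1) * b ^ 2 := by
      rw [f2]
      nlinarith [hy2]
    have hprod2 : ((K:ℝ) * (∑ i, (u i) ^ 2)) * ((K:ℝ) * (∑ i, (v i) ^ 2))
        ≤ a ^ 2 * b ^ 2 := by
      calc ((K:ℝ) * (∑ i, (u i) ^ 2)) * ((K:ℝ) * (∑ i, (v i) ^ 2))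
          ≤ ((K:ℝ) * (∑ i, (u i) ^ 2)) * (((K:ℝ) - 1) * b ^ 2) :=
            mul_le_mul_of_nonneg_left g2 (by positivity)
        _ = (((K:ℝ) - 1) * ((K:ℝ) * (∑ i, (u i) ^ 2))) * b ^ 2 := by ring
        _ ≤ a ^ 2 * b ^ 2 := mul_le_mul_of_nonneg_right g1 (sq_nonneg b)
    have hprod : (∑ i, (u i) ^ 2) * (∑ i, (v i) ^ 2) ≤ (a * b / K) ^ 2 := by
      rw [div_pow, mul_pow, le_div_iff₀ (by positivity)]
      calc (∑ i, (u i) ^ 2) * (∑ i, (v i) ^ 2) * (K:ℝ) ^ 2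
          = ((K:ℝ) * (∑ i, (u i) ^ 2)) * ((K:ℝ) * (∑ i, (v i) ^ 2)) := by ring
        _ ≤ a ^ 2 * b ^ 2 := hprod2
    -- expand the inner product
    have hexp : ∑ i, u i * v i = (∑ i, x i * y i) - a * b / K := by
      have h1 : ∀ i : Fin K, u i * v i =
          x i * y i - (b / K) * x i - (a / K) * y i + (a / K) * (b / K) := by
        intro i; simp only [hu, hv]; ring
      rw [Finset.sum_congr rfl fun i _ => h1 i]
      rw [Finset.sum_add_distrib, Finset.sum_sub_distrib, Finset.sum_sub_distrib,
        ← Finset.mul_sum, ← Finset.mul_sum, Finset.sum_const, Finset.card_univ,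
        Fintype.card_fin, nsmul_eq_mul]
      field_simp
      ring
    -- conclude
    have hab : 0 ≤ a * b / K := by positivity
    nlinarith [cs, hprod, hexp, hab, sq_nonneg ((∑ i, u i * v i) + a * b / K)]
  · -- backward direction
    intro hy
    set b := ∑ i, y i with hb
    -- Step 1: b ≥ 0, using x = 1
    have hb0 : 0 ≤ b := by
      have h1 : ∀ i : Fin K, (0:ℝ) ≤ (1 : Fin K → ℝ) i := fun i => zero_le_one
      have hsum : ∑ i : Fin K, (1 : Fin K → ℝ) i = K := by simp
      have hsq : ∑ i : Fin K, ((1 : Fin K → ℝ) i) ^ 2 = K := by simp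
      have hmem : Real.sqrt ((K:ℝ) - 1) * Real.sqrt (∑ i, ((1 : Fin K → ℝ) i) ^ 2)
          ≤ ∑ i, (1 : Fin K → ℝ) i := by
        rw [hsum, hsq, ← Real.sqrt_mul hKm1.le]
        calc Real.sqrt (((K:ℝ) - 1) * K) ≤ Real.sqrt ((K:ℝ) ^ 2) := by
              apply Real.sqrt_le_sqrt; nlinarith
          _ = K := Real.sqrt_sq hKR.le
      have := hy 1 ⟨h1, hmem⟩
      simpa [hb] using this
    -- centered vector
    set v : Fin K → ℝ := fun i => y i - b / K with hv
    have hvsum : ∑ i, v i = 0 := centered_sum hKne y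
    have hv2 : ∑ i, (v i) ^ 2 = (∑ i, (y i) ^ 2) - b ^ 2 / K := centered_sum_sq hKne y
    set q := ∑ i, (v i) ^ 2 with hq
    have hq0 : 0 ≤ q := by positivity
    -- componentwise bound: K * (v i)^2 ≤ (K-1) * q
    have hcomp : ∀ i : Fin K, (K:ℝ) * (v i) ^ 2 ≤ ((K:ℝ) - 1) * q := by
      intro i
      have herase : ∑ j ∈ Finset.univ.erase i, v j = - v i := by
        have h := Finset.sum_erase_add Finset.univ v (Finset.mem_univ i)
        rw [hvsum] at h; linarith
      have hcard : (((Finset.univ : Finset (Fin K)).erase i).card : ℝ) = (K:ℝ) - 1 := by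
        rw [Finset.card_erase_of_mem (Finset.mem_univ i), Finset.card_univ,
          Fintype.card_fin]
        have h1 : (1:ℕ) ≤ K := by omega
        push_cast [Nat.cast_sub h1]
        ring
      have heraseq : ∑ j ∈ Finset.univ.erase i, (v j) ^ 2 = q - (v i) ^ 2 := by
        have h : ∑ j ∈ Finset.univ.erase i, (v j) ^ 2 + (v i) ^ 2
            = ∑ j, (v j) ^ 2 := Finset.sum_erase_add Finset.univ _ (Finset.mem_univ i)
        rw [hq]; linarith [h]
      have cs := sq_sum_le_card_mul_sum_sq (s := Finset.univ.erase i) (f := v)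
      rw [herase, heraseq, hcard] at cs
      nlinarith [cs]
    -- define A and x
    set A := Real.sqrt (((K:ℝ) - 1) * q / K) with hA
    have hA0 : 0 ≤ A := Real.sqrt_nonneg _
    have hA2 : A ^ 2 = ((K:ℝ) - 1) * q / K := Real.sq_sqrt (by positivity)
    set x : Fin K → ℝ := fun i => A - v i with hx
    have hx0 : ∀ i, 0 ≤ x i := by
      intro i
      have h1 : v i ≤ A := by
        rcases le_or_gt (v i) 0 with h | h
        · linarith
        · have h2 : (v i) ^ 2 ≤ ((K:ℝ) - 1) * q / K := by
            rw [le_div_iff₀ hKR]; nlinarith [hcomp i]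
          calc v i = Real.sqrt ((v i) ^ 2) := (Real.sqrt_sq h.le).symm
            _ ≤ A := Real.sqrt_le_sqrt h2
      simp only [hx]; linarith
    have hxsum : ∑ i, x i = K * A := by
      simp only [hx]
      rw [Finset.sum_sub_distrib, hvsum, Finset.sum_const, Finset.card_univ,
        Fintype.card_fin, nsmul_eq_mul]
      ring
    have hxsq : ∑ i, (x i) ^ 2 = (K:ℝ) * q := by
      have h1 : ∀ i : Fin K, (x i) ^ 2 = A ^ 2 - 2 * A * v i + (v i) ^ 2 := by
        intro i; simp only [hx]; ring
      rw [Finset.sum_congr rfl fun i _ => h1 i]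
      rw [Finset.sum_add_distrib, Finset.sum_sub_distrib, ← Finset.mul_sum, hvsum,
        Finset.sum_const, Finset.card_univ, Fintype.card_fin, nsmul_eq_mul, ← hq, hA2]
      field_simp
      ring
    have hxmem : Real.sqrt ((K:ℝ) - 1) * Real.sqrt (∑ i, (x i) ^ 2) ≤ ∑ i, x i := by
      rw [hxsum, hxsq, ← Real.sqrt_mul hKm1.le]
      have hKA : (K:ℝ) * A = Real.sqrt ((K:ℝ) ^ 2 * (((K:ℝ) - 1) * q / K)) := by
        rw [Real.sqrt_mul (by positivity), Real.sqrt_sq hKR.le, hA]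
      rw [hKA]
      apply le_of_eq
      congr 1
      field_simp
    -- evaluate the inner product
    have hvy : ∑ i, v i * y i = q := by
      have h1 : ∀ i : Fin K, v i * y i = (v i) ^ 2 + (b / K) * v i := by
        intro i; simp only [hv]; ring
      rw [Finset.sum_congr rfl fun i _ => h1 i, Finset.sum_add_distrib,
        ← Finset.mul_sum, hvsum, ← hq]
      ring
    have hxy : ∑ i, x i * y i = A * b - q := by
      have h1 : ∀ i : Fin K, x i * y i = A * y i - v i * y i := by
        intro i; simp only [hx]; ring
      rw [Finset.sum_congr rfl fun i _ => h1 i, Finset.sum_sub_distrib,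
        ← Finset.mul_sum, ← hb, hvy]
    have hkey := hy x ⟨hx0, hxmem⟩
    rw [hxy] at hkey
    have hqAb : q ≤ A * b := by linarith
    -- deduce K * q ≤ (K-1) * b^2
    have hqb : (K:ℝ) * q ≤ ((K:ℝ) - 1) * b ^ 2 := by
      rcases hq0.eq_or_lt with h | h
      · rw [← h, mul_zero]; positivity
      · have hsq : q ^ 2 ≤ (A * b) ^ 2 := pow_le_pow_left₀ hq0 hqAb 2
        rw [mul_pow, hA2] at hsq
        have : q * ((K:ℝ) * q) ≤ q * (((K:ℝ) - 1) * b ^ 2) := by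
          rw [div_mul_eq_mul_div, le_div_iff₀ hKR] at hsq
          nlinarith [hsq]
        exact le_of_mul_le_mul_left this h
    -- conclude
    have hfin : ∑ i, (y i) ^ 2 ≤ b ^ 2 := by
      have hKq : (K:ℝ) * q = K * (∑ i, (y i) ^ 2) - b ^ 2 := by
        rw [hv2]; field_simp
      have h : (K:ℝ) * (∑ i, (y i) ^ 2) ≤ (K:ℝ) * b ^ 2 := by linarith
      exact le_of_mul_le_mul_left h hKR
    calc Real.sqrt (∑ i, (y i) ^ 2) ≤ Real.sqrt (b ^ 2) := Real.sqrt_le_sqrt hfin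
      _ = b := Real.sqrt_sq hb0
end

section
/- Let M ∈ ℝ_+^{I×K} be such that M^T satisfies SSC1, i.e., C = { y ∈ ℝ_+^K : 1^T y ≥ √(K−1)·‖y‖₂ } is contained in cone(M^T), the conic hull of the rows of M. Then any vector s ∈ ℝ^K with M s ≥ 0 (entrywise) satisfies 1^T s ≥ ‖s‖₂. -/
theorem stmt9 {I K : ℕ}
    (M : Matrix (Fin I) (Fin K) ℝ)
    (hMnn : ∀ i k, 0 ≤ M i k)
    (hSSC1 : ∀ y ∈ {y : Fin K → ℝ | (∀ i, 0 ≤ y i) ∧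
        Real.sqrt ((K : ℝ) - 1) * Real.sqrt (∑ i, (y i) ^ 2) ≤ ∑ i, y i},
      ∃ c : Fin I → ℝ, (∀ i, 0 ≤ c i) ∧ ∀ k, y k = ∑ i, c i * M i k)
    (s : Fin K → ℝ) (hs : ∀ i, 0 ≤ ∑ k, M i k * s k) :
    Real.sqrt (∑ k, (s k) ^ 2) ≤ ∑ k, s k := by
  set n : ℝ := Real.sqrt (∑ k, (s k) ^ 2) with hn
  have hsum_nn : (0:ℝ) ≤ ∑ k, (s k) ^ 2 :=
    Finset.sum_nonneg fun k _ => sq_nonneg _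
  have hn_nn : 0 ≤ n := Real.sqrt_nonneg _
  have hn2 : n ^ 2 = ∑ k, (s k) ^ 2 := Real.sq_sqrt hsum_nn
  have habs : ∀ k, |s k| ≤ n := by
    intro k
    rw [hn, ← Real.sqrt_sq_eq_abs]
    exact Real.sqrt_le_sqrt (Finset.single_le_sum (fun j _ => sq_nonneg (s j)) (Finset.mem_univ k))
  set y : Fin K → ℝ := fun k => n - s k with hy
  have hy_nn : ∀ k, 0 ≤ y k := by
    intro k
    have h := abs_le.mp (habs k)
    simp only [hy]
    linarith [h.2]
  set σ : ℝ := ∑ k, s k with hσ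
  have hsumy : ∑ k, y k = K * n - σ := by
    simp [hy, Finset.sum_sub_distrib, hσ, mul_comm]
  have hB_nn : 0 ≤ (K:ℝ) * n - σ := by
    have h : σ ≤ ∑ k : Fin K, n := by
      rw [hσ]
      exact Finset.sum_le_sum fun k _ => le_trans (le_abs_self _) (habs k)
    simp at h
    linarith
  have hsumy2 : ∑ k, (y k) ^ 2 = (K:ℝ) * n ^ 2 - 2 * n * σ + n ^ 2 := by
    have h : ∀ k ∈ Finset.univ, (y k) ^ 2 = n ^ 2 - 2 * n * s k + (s k) ^ 2 := by
      intro k _; simp only [hy]; ring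
    rw [Finset.sum_congr rfl h, Finset.sum_add_distrib, Finset.sum_sub_distrib,
      ← hn2, ← Finset.mul_sum, ← hσ]
    simp
    try ring
  have hyC : Real.sqrt ((K : ℝ) - 1) * Real.sqrt (∑ k, (y k) ^ 2) ≤ ∑ k, y k := by
    have hy2_nn : (0:ℝ) ≤ ∑ k, (y k) ^ 2 := Finset.sum_nonneg fun k _ => sq_nonneg _
    rcases le_or_gt ((K:ℝ) - 1) 0 with hK | hK
    · rw [Real.sqrt_eq_zero_of_nonpos hK, zero_mul]
      exact Finset.sum_nonneg fun k _ => hy_nn k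
    · rw [← Real.sqrt_mul hK.le, hsumy,
        show (K:ℝ) * n - σ = Real.sqrt (((K:ℝ)*n - σ)^2) from (Real.sqrt_sq hB_nn).symm]
      apply Real.sqrt_le_sqrt
      rw [hsumy2]
      nlinarith [sq_nonneg (n - σ)]
  obtain ⟨c, hc_nn, hc⟩ := hSSC1 y ⟨hy_nn, hyC⟩
  have hdot : 0 ≤ ∑ k, y k * s k := by
    have heq : ∑ k, y k * s k = ∑ i, c i * ∑ k, M i k * s k := by
      calc ∑ k, y k * s k = ∑ k, ∑ i, c i * M i k * s k := by
            apply Finset.sum_congr rfl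
            intro k _
            rw [hc k, Finset.sum_mul]
        _ = ∑ i, ∑ k, c i * M i k * s k := Finset.sum_comm
        _ = ∑ i, c i * ∑ k, M i k * s k := by
            apply Finset.sum_congr rfl
            intro i _
            rw [Finset.mul_sum]
            exact Finset.sum_congr rfl fun k _ => by ring
    rw [heq]
    exact Finset.sum_nonneg fun i _ => mul_nonneg (hc_nn i) (hs i)
  have hdot2 : ∑ k, y k * s k = n * σ - n ^ 2 := by
    have h : ∀ k ∈ Finset.univ, y k * s k = n * s k - (s k)^2 := by
      intro k _; simp [hy]; ring
    rw [Finset.sum_congr rfl h, Finset.sum_sub_distrib, ← Finset.mul_sum, ← hσ, hn2]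
  rw [hdot2] at hdot
  rcases eq_or_lt_of_le hn_nn with h0 | hpos
  · have hs0 : ∑ k, (s k) ^ 2 = 0 := by rw [← hn2, ← h0]; ring
    have : ∀ k ∈ Finset.univ, (s k) ^ 2 = 0 :=
      (Finset.sum_eq_zero_iff_of_nonneg fun k _ => sq_nonneg _).mp hs0
    have hall : ∀ k, s k = 0 := fun k => by
      have := this k (Finset.mem_univ k); nlinarith
    have hσ0 : σ = 0 := by rw [hσ]; simp [hall]
    linarith
  · nlinarith
end

section
/- Identifiability of maximum-volume-constrained NMF: let X = M̃H̃ with M̃ ∈ ℝ_+^{I×K}, H̃ ∈ ℝ_+^{K×J}, rank(M̃) = rank(H̃) = K, 1^T H̃ = 1^T, and suppose M̃^T satisfies the sufficiently scattered condition (SSC1 and SSC2). If (M#, H#) is any optimal solution of maximizing det(M^T M) subject to X = MH, M ≥ 0, H ≥ 0, 1^T H = 1^T, then there exists a permutation matrix Γ with M# = M̃Γ and H# = Γ^T H̃. -/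
set_option maxHeartbeats 1600000

open Matrix Finset

lemma aux_isUnit {n : ℕ} (A : Matrix (Fin n) (Fin n) ℝ) (h : A.rank = n) : IsUnit A := by
  have h1 : LinearMap.range A.mulVecLin = ⊤ := by
    apply Submodule.eq_top_of_finrank_eq
    rw [Matrix.rank] at h
    simp [h]
  have hsurj : Function.Surjective A.mulVecLin := LinearMap.range_eq_top.mp h1
  have hinj : Function.Injective A.mulVec := by
    have := (LinearMap.injective_iff_surjective (f := A.mulVecLin)).mpr hsurj
    exact this
  exact Matrix.mulVec_injective_iff_isUnit.mp hinj

lemma aux_trace {n : ℕ} (A : Matrix (Fin n) (Fin n) ℝ) (hA : A.IsHermitian) :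
    A.trace = ∑ i, hA.eigenvalues i := by
  rw [hA.trace_eq_sum_eigenvalues]; simp

lemma aux_psd {m n : ℕ} (A : Matrix (Fin m) (Fin n) ℝ) : (Aᵀ * A).PosSemidef := by
  have := Matrix.posSemidef_conjTranspose_mul_self A
  rwa [Matrix.conjTranspose_eq_transpose_of_trivial] at this

lemma aux_det_nonneg {n : ℕ} (A : Matrix (Fin n) (Fin n) ℝ) (h : A.PosSemidef) : 0 ≤ A.det := by
  rw [h.1.det_eq_prod_eigenvalues]
  exact Finset.prod_nonneg fun i _ => h.eigenvalues_nonneg i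

lemma aux_dual {I K : ℕ} (Mt : Matrix (Fin I) (Fin K) ℝ) (hK2 : 2 ≤ K)
    (hSSC1 : ∀ y ∈ {y : Fin K → ℝ | (∀ i, 0 ≤ y i) ∧
        Real.sqrt ((K : ℝ) - 1) * Real.sqrt (∑ i, (y i) ^ 2) ≤ ∑ i, y i},
      ∃ c : Fin I → ℝ, (∀ i, 0 ≤ c i) ∧ ∀ k, y k = ∑ i, c i * Mt i k)
    (y : Fin K → ℝ) (hy : ∀ i, 0 ≤ ∑ k, Mt i k * y k) :
    Real.sqrt (∑ k, (y k) ^ 2) ≤ ∑ k, y k := by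
  have hK0 : (0:ℝ) < K := by
    have : (2:ℝ) ≤ K := by exact_mod_cast hK2
    linarith
  have hK1 : (1:ℝ) ≤ (K:ℝ) - 1 := by
    have : (2:ℝ) ≤ K := by exact_mod_cast hK2
    linarith
  have hpos : ∀ z : Fin K → ℝ, (∀ i, 0 ≤ z i) →
      Real.sqrt ((K : ℝ) - 1) * Real.sqrt (∑ i, (z i) ^ 2) ≤ ∑ i, z i →
      0 ≤ ∑ k, z k * y k := by
    intro z h1 h2
    obtain ⟨c, hc0, hcz⟩ := hSSC1 z ⟨h1, h2⟩
    have : ∑ k, z k * y k = ∑ i, c i * ∑ k, Mt i k * y k := by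
      simp_rw [hcz, Finset.sum_mul, Finset.mul_sum]
      rw [Finset.sum_comm]
      congr 1; ext i; congr 1; ext k; ring
    rw [this]
    exact Finset.sum_nonneg fun i _ => mul_nonneg (hc0 i) (hy i)
  by_contra hcon
  push_neg at hcon
  set s := ∑ k, y k with hs_def
  set q := ∑ k, (y k) ^ 2 with hq_def
  have hq0 : 0 ≤ q := Finset.sum_nonneg fun k _ => sq_nonneg _
  have hs0 : 0 ≤ s := by
    have h1 : ∀ i : Fin K, (0:ℝ) ≤ (fun _ : Fin K => (1:ℝ)) i := fun i => zero_le_one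
    have h2 : Real.sqrt ((K : ℝ) - 1) * Real.sqrt (∑ i : Fin K, ((1:ℝ)) ^ 2) ≤
        ∑ i : Fin K, (1:ℝ) := by
      have e1 : ∑ i : Fin K, ((1:ℝ)) ^ 2 = (K:ℝ) := by simp
      have e2 : ∑ i : Fin K, (1:ℝ) = (K:ℝ) := by simp
      rw [e1, e2, ← Real.sqrt_mul (by linarith)]
      calc Real.sqrt (((K:ℝ) - 1) * K) ≤ Real.sqrt ((K:ℝ) * K) := by
            apply Real.sqrt_le_sqrt; nlinarith
        _ = K := by rw [Real.sqrt_mul_self hK0.le]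
    have := hpos (fun _ => 1) h1 h2
    simpa [hs_def] using this
  have hsq : s ^ 2 < q := (Real.lt_sqrt hs0).mp hcon
  set w : Fin K → ℝ := fun k => y k - s / K with hw_def
  have hw1 : ∑ k, w k = 0 := by
    simp only [hw_def, Finset.sum_sub_distrib]
    simp [Finset.card_univ]
    field_simp
    linarith
  set p := q - s ^ 2 / K with hp_def
  have hw2 : ∑ k, (w k) ^ 2 = p := by
    have e : ∀ k, (w k) ^ 2 = (y k) ^ 2 - 2 * (s / K) * (y k) + (s / K) ^ 2 := by
      intro k; simp only [hw_def]; ring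
    simp_rw [e]
    rw [Finset.sum_add_distrib, Finset.sum_sub_distrib, ← Finset.mul_sum]
    simp only [← hq_def, ← hs_def, Finset.sum_const, Finset.card_univ, Fintype.card_fin,
      nsmul_eq_mul, hp_def]
    field_simp
    ring
  have hp0 : 0 < p := by
    have : s ^ 2 / K ≤ s ^ 2 := by
      apply div_le_self (sq_nonneg s)
      linarith
    simp only [hp_def]; linarith
  set t := Real.sqrt ((K:ℝ) * ((K:ℝ) - 1) * p) with ht_def
  have ht0 : 0 ≤ t := Real.sqrt_nonneg _
  have ht2 : t ^ 2 = (K:ℝ) * ((K:ℝ) - 1) * p := Real.sq_sqrt (by positivity)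
  set z : Fin K → ℝ := fun k => t / K - w k with hz_def
  have hzw : ∀ k, w k ≤ t / K := by
    intro k
    have hkey : (K:ℝ) * (w k) ^ 2 ≤ ((K:ℝ) - 1) * p := by
      have hmem : k ∈ (Finset.univ : Finset (Fin K)) := Finset.mem_univ k
      have h1 : ∑ m ∈ Finset.univ.erase k, w m = - w k := by
        rw [Finset.sum_erase_eq_sub hmem, hw1]; ring
      have h3 : ∑ m ∈ Finset.univ.erase k, (w m) ^ 2 = p - (w k) ^ 2 := by
        rw [Finset.sum_erase_eq_sub hmem, hw2]
      have h2 := sq_sum_le_card_mul_sum_sq (s := Finset.univ.erase k) (f := w)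
      rw [h1, h3, Finset.card_erase_of_mem hmem, Finset.card_univ, Fintype.card_fin] at h2
      have hcast : ((K - 1 : ℕ) : ℝ) = (K:ℝ) - 1 := by
        have : 1 ≤ K := by omega
        push_cast [Nat.cast_sub this]; ring
      rw [hcast] at h2
      nlinarith [h2]
    by_cases hwk : w k ≤ 0
    · exact le_trans hwk (by positivity)
    · push_neg at hwk
      have h4 : ((K:ℝ) * w k) ^ 2 ≤ t ^ 2 := by
        rw [ht2]; nlinarith [hkey]
      have h5 : (K:ℝ) * w k ≤ t := by
        have := Real.sqrt_le_sqrt h4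
        rwa [Real.sqrt_sq (by positivity), Real.sqrt_sq ht0] at this
      rw [le_div_iff₀ hK0]
      linarith
  have hz0 : ∀ k, 0 ≤ z k := by
    intro k; simp only [hz_def]; linarith [hzw k]
  have hzs : ∑ k, z k = t := by
    simp only [hz_def, Finset.sum_sub_distrib, hw1]
    simp [Finset.card_univ]
    field_simp
  have hzq : ∑ k, (z k) ^ 2 = t ^ 2 / K + p := by
    have e : ∀ k, (z k) ^ 2 = (t / K) ^ 2 - 2 * (t / K) * (w k) + (w k) ^ 2 := by
      intro k; simp only [hz_def]; ring
    simp_rw [e]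
    rw [Finset.sum_add_distrib, Finset.sum_sub_distrib, ← Finset.mul_sum, hw1, hw2]
    simp [Finset.card_univ]
    field_simp
  have hzC : Real.sqrt ((K : ℝ) - 1) * Real.sqrt (∑ i, (z i) ^ 2) ≤ ∑ i, z i := by
    rw [hzq, hzs, ← Real.sqrt_mul (by linarith)]
    have e : ((K:ℝ) - 1) * (t ^ 2 / K + p) = t ^ 2 := by
      rw [ht2]; field_simp; ring
    rw [e, Real.sqrt_sq ht0]
  have hZ := hpos z hz0 hzC
  have hzy : ∑ k, z k * y k = t * s / K - p := by
    have e : ∀ k, z k * y k = (t / K) * y k - w k * y k := by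
      intro k; simp only [hz_def]; ring
    simp_rw [e]
    rw [Finset.sum_sub_distrib, ← Finset.mul_sum, ← hs_def]
    have e2 : ∑ k, w k * y k = p := by
      have e3 : ∀ k, w k * y k = (y k) ^ 2 - (s / K) * y k := by
        intro k; simp only [hw_def]; ring
      simp_rw [e3]
      rw [Finset.sum_sub_distrib, ← Finset.mul_sum, ← hq_def, ← hs_def, hp_def]
      field_simp
    rw [e2]
    ring
  rw [hzy] at hZ
  have hts : (K:ℝ) * p ≤ t * s := by
    have := mul_le_mul_of_nonneg_left hZ hK0.le
    rw [mul_sub, mul_div_cancel₀] at this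
    · linarith
    · exact hK0.ne'
  have h1 : ((K:ℝ) * p) * ((K:ℝ) * p) ≤ (t * s) * (t * s) :=
    mul_self_le_mul_self (by positivity) hts
  have h2 : (t * s) * (t * s) = ((K:ℝ) * p) * (((K:ℝ) - 1) * s ^ 2) := by
    have : (t * s) * (t * s) = t ^ 2 * s ^ 2 := by ring
    rw [this, ht2]; ring
  have hKp : 0 < (K:ℝ) * p := by positivity
  have h3 : (K:ℝ) * p ≤ ((K:ℝ) - 1) * s ^ 2 :=
    le_of_mul_le_mul_left (by calc ((K:ℝ)*p) * ((K:ℝ)*p) ≤ (t*s)*(t*s) := h1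
      _ = ((K:ℝ)*p) * (((K:ℝ)-1) * s^2) := h2) hKp
  have h4 : (K:ℝ) * p = (K:ℝ) * q - s ^ 2 := by
    simp only [hp_def]; field_simp
  have h5 : (K:ℝ) * q ≤ (K:ℝ) * s ^ 2 := by linarith
  have h6 : q ≤ s ^ 2 := (mul_le_mul_iff_right₀ hK0).mp h5
  linarith

lemma aux_colnorm {K : ℕ} (hK : 2 ≤ K) (A : Matrix (Fin K) (Fin K) ℝ)
    (hdet2 : 1 ≤ A.det ^ 2)
    (hAsum : ∀ j, ∑ k, A k j = 1)
    (hsq : ∀ j, Real.sqrt (∑ k, (A k j) ^ 2) ≤ 1) :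
    ∀ j, ∑ k, (A k j) ^ 2 = 1 := by
  have hKpos : (0:ℝ) < K := by
    have : (2:ℝ) ≤ K := by exact_mod_cast hK
    linarith
  set colq : Fin K → ℝ := fun j => ∑ k, (A k j) ^ 2 with hcolq_def
  have hcolq_nn : ∀ j, 0 ≤ colq j := fun j => Finset.sum_nonneg fun k _ => sq_nonneg _
  have hcol_le1 : ∀ j, colq j ≤ 1 := by
    intro j
    have h1 := hsq j
    have h2 : colq j = Real.sqrt (colq j) * Real.sqrt (colq j) :=
      (Real.mul_self_sqrt (hcolq_nn j)).symm
    nlinarith [Real.sqrt_nonneg (colq j)]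
  set G' : Matrix (Fin K) (Fin K) ℝ := Aᵀ * A with hG'_def
  have hG'psd : G'.PosSemidef := aux_psd A
  have hherm : G'.IsHermitian := hG'psd.1
  set lam : Fin K → ℝ := hherm.eigenvalues with hlam_def
  have hlam_nn : ∀ i, 0 ≤ lam i := fun i => hG'psd.eigenvalues_nonneg i
  have htr : G'.trace = ∑ j, colq j := by
    simp only [hG'_def, Matrix.trace, Matrix.diag, Matrix.mul_apply, Matrix.transpose_apply,
      hcolq_def, pow_two]
  have htr2 : G'.trace = ∑ i, lam i := aux_trace G' hherm
  have hdetprod : G'.det = ∏ i, lam i := by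
    have := hherm.det_eq_prod_eigenvalues
    simpa using this
  have hdetA : G'.det = A.det ^ 2 := by
    rw [hG'_def, Matrix.det_mul, Matrix.det_transpose, pow_two]
  have hprod_ge : 1 ≤ ∏ i, lam i := by rw [← hdetprod, hdetA]; exact hdet2
  have htrace_le : G'.trace ≤ K := by
    rw [htr]
    calc ∑ j, colq j ≤ ∑ _j : Fin K, (1:ℝ) := Finset.sum_le_sum fun j _ => hcol_le1 j
      _ = K := by simp
  have hw : ∑ _i : Fin K, (1/(K:ℝ)) = 1 := by
    simp [Finset.card_univ]
    field_simp
  have hamgm := Real.geom_mean_le_arith_mean_weighted Finset.univ (fun _ => 1/(K:ℝ)) lam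
    (fun i _ => by positivity) hw (fun i _ => hlam_nn i)
  set P := ∏ i, lam i ^ (1/(K:ℝ) : ℝ) with hP_def
  have hP_nn : 0 ≤ P := Finset.prod_nonneg fun i _ => Real.rpow_nonneg (hlam_nn i) _
  have hP_pow : P ^ K = ∏ i, lam i := by
    rw [hP_def, ← Finset.prod_pow]
    apply Finset.prod_congr rfl
    intro i _
    rw [← Real.rpow_natCast (lam i ^ (1/(K:ℝ))) K, ← Real.rpow_mul (hlam_nn i)]
    rw [one_div_mul_cancel (by positivity : (K:ℝ) ≠ 0), Real.rpow_one]
  have hsum_eq : ∑ i, (1/(K:ℝ)) * lam i = G'.trace / K := by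
    rw [htr2, ← Finset.mul_sum]
    ring
  have htrace_ge : (K:ℝ) ≤ G'.trace := by
    by_contra hlt
    push_neg at hlt
    have h1 : G'.trace / K < 1 := by rw [div_lt_one hKpos]; exact hlt
    have h2 : P ≤ G'.trace / K := by rw [← hsum_eq]; exact hamgm
    have h3 : P ^ K ≤ (G'.trace / K) ^ K := by
      apply pow_le_pow_left₀ hP_nn h2
    have h0 : 0 ≤ G'.trace / K :=
      div_nonneg (by rw [htr]; exact Finset.sum_nonneg fun j _ => hcolq_nn j) hKpos.le
    have h4 : (G'.trace / K) ^ K < 1 := pow_lt_one₀ h0 h1 (by omega)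
    rw [hP_pow] at h3
    linarith [hprod_ge]
  have htrace_eq : ∑ j, colq j = (K:ℝ) := by
    rw [← htr]
    linarith
  intro j
  by_contra hne
  have hlt : colq j < 1 := lt_of_le_of_ne (hcol_le1 j) hne
  have : ∑ j', colq j' < ∑ _j' : Fin K, (1:ℝ) := by
    apply Finset.sum_lt_sum (fun i _ => hcol_le1 i) ⟨j, Finset.mem_univ j, hlt⟩
  simp at this
  rw [htrace_eq] at this
  exact absurd this (lt_irrefl _)

lemma aux_frontier {K : ℕ} (hK : 2 ≤ K) (a : Fin K → ℝ)
    (hq : ∑ k, (a k) ^ 2 = 1) (hs : ∑ k, a k = 1) :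
    a ∈ frontier {y : Fin K → ℝ | Real.sqrt (∑ i, (y i) ^ 2) ≤ ∑ i, y i} := by
  have hKR : (2:ℝ) ≤ (K:ℝ) := by exact_mod_cast hK
  rw [frontier_eq_closure_inter_closure]
  constructor
  · apply subset_closure
    show Real.sqrt (∑ i, (a i) ^ 2) ≤ ∑ i, a i
    rw [hq, hs, Real.sqrt_one]
  · rw [Metric.mem_closure_iff]
    intro δ hδ
    set ε : ℝ := min (δ/2) (1/(2*K)) with hε_def
    have hε0 : 0 < ε := lt_min (by linarith) (by positivity)
    have hεK : ε ≤ 1/(2*(K:ℝ)) := min_le_right _ _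
    have hεδ : ε ≤ δ/2 := min_le_left _ _
    have hKε : (K:ℝ) * ε ≤ 1/2 := by
      calc (K:ℝ) * ε ≤ (K:ℝ) * (1/(2*(K:ℝ))) :=
            mul_le_mul_of_nonneg_left hεK (by linarith)
        _ = 1/2 := by field_simp
    refine ⟨fun k => a k - ε, ?_, ?_⟩
    · simp only [Set.mem_compl_iff, Set.mem_setOf_eq, not_le]
      have e1 : ∑ i : Fin K, (a i - ε) = 1 - K * ε := by
        rw [Finset.sum_sub_distrib, hs]
        simp [Finset.card_univ]
      have e2 : ∑ i : Fin K, (a i - ε) ^ 2 = 1 - 2 * ε + K * ε ^ 2 := by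
        have e : ∀ i, (a i - ε) ^ 2 = (a i) ^ 2 - 2 * ε * a i + ε ^ 2 := fun i => by ring
        simp_rw [e]
        rw [Finset.sum_add_distrib, Finset.sum_sub_distrib, ← Finset.mul_sum, hq, hs]
        simp [Finset.card_univ]
      rw [e1, e2]
      apply (Real.lt_sqrt (by linarith)).mpr
      have h1 : ((K:ℝ)*ε)*((K:ℝ)*ε) ≤ (1/2)*((K:ℝ)*ε) :=
        mul_le_mul_of_nonneg_right hKε (by positivity)
      have h2 : (K:ℝ)*(ε*ε) ≤ ε*(1/2) := by
        have := mul_le_mul_of_nonneg_left hKε hε0.le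
        nlinarith [this]
      nlinarith [h1, h2, hε0, hKR]
    · have : dist a (fun k => a k - ε) < δ := by
        rw [dist_pi_lt_iff hδ]
        intro k
        simp only [Real.dist_eq]
        rw [show a k - (a k - ε) = ε by ring, abs_of_pos hε0]
        linarith
      exact this

theorem stmt12 {I J K : ℕ}
    (X : Matrix (Fin I) (Fin J) ℝ)
    (Mt : Matrix (Fin I) (Fin K) ℝ) (Ht : Matrix (Fin K) (Fin J) ℝ)
    (hMtnn : ∀ i k, 0 ≤ Mt i k) (hHtnn : ∀ k j, 0 ≤ Ht k j)
    (hX : X = Mt * Ht)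
    (hrM : Mt.rank = K) (hrH : Ht.rank = K)
    (hHtsum : ∀ j, ∑ k, Ht k j = 1)
    (hSSC1 : ∀ y ∈ {y : Fin K → ℝ | (∀ i, 0 ≤ y i) ∧
        Real.sqrt ((K : ℝ) - 1) * Real.sqrt (∑ i, (y i) ^ 2) ≤ ∑ i, y i},
      ∃ c : Fin I → ℝ, (∀ i, 0 ≤ c i) ∧ ∀ k, y k = ∑ i, c i * Mt i k)
    (hSSC2 : {y : Fin K → ℝ | ∀ i, 0 ≤ ∑ k, Mt i k * y k} ∩
        frontier {y : Fin K → ℝ | Real.sqrt (∑ i, (y i) ^ 2) ≤ ∑ i, y i} =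
      {y : Fin K → ℝ | ∃ α : ℝ, 0 ≤ α ∧ ∃ k : Fin K, y = α • (Pi.single k 1 : Fin K → ℝ)})
    (Ms : Matrix (Fin I) (Fin K) ℝ) (Hs : Matrix (Fin K) (Fin J) ℝ)
    (hMsnn : ∀ i k, 0 ≤ Ms i k) (hHsnn : ∀ k j, 0 ≤ Hs k j)
    (hXs : X = Ms * Hs)
    (hHssum : ∀ j, ∑ k, Hs k j = 1)
    (hopt : ∀ (M : Matrix (Fin I) (Fin K) ℝ) (H : Matrix (Fin K) (Fin J) ℝ),
      (∀ i k, 0 ≤ M i k) → (∀ k j, 0 ≤ H k j) → X = M * H →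
      (∀ j, ∑ k, H k j = 1) →
      (M.transpose * M).det ≤ (Ms.transpose * Ms).det) :
    ∃ Γ : Matrix (Fin K) (Fin K) ℝ,
      (∃ σ : Equiv.Perm (Fin K), ∀ i j, Γ i j = if σ j = i then 1 else 0) ∧
      Ms = Mt * Γ ∧ Hs = Γ.transpose * Ht := by
  classical
  obtain rfl | rfl | hK2 : K = 0 ∨ K = 1 ∨ 2 ≤ K := by omega
  · -- K = 0 : everything is trivial
    refine ⟨1, ⟨Equiv.refl _, fun i => i.elim0⟩, ?_, ?_⟩
    · ext i j; exact j.elim0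
    · ext i j; exact i.elim0
  · -- K = 1 : hSSC2 is contradictory
    exfalso
    set S : Set (Fin 1 → ℝ) := {y : Fin 1 → ℝ | Real.sqrt (∑ i, (y i) ^ 2) ≤ ∑ i, y i}
      with hS_def
    set y₀ : Fin 1 → ℝ := fun _ => 1 with hy₀_def
    have hy₀mem : y₀ ∈ {y : Fin 1 → ℝ | ∃ α : ℝ, 0 ≤ α ∧
        ∃ k : Fin 1, y = α • (Pi.single k 1 : Fin 1 → ℝ)} := by
      refine ⟨1, zero_le_one, 0, ?_⟩
      funext m
      fin_cases m
      simp [hy₀_def]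
    rw [← hSSC2] at hy₀mem
    obtain ⟨-, hfr⟩ := hy₀mem
    have hint : y₀ ∈ interior S := by
      have hopen : IsOpen {y : Fin 1 → ℝ | 0 < y 0} :=
        isOpen_lt continuous_const (continuous_apply 0)
      have hsub : {y : Fin 1 → ℝ | 0 < y 0} ⊆ S := by
        intro y hy
        show Real.sqrt (∑ i, (y i) ^ 2) ≤ ∑ i, y i
        rw [Fin.sum_univ_one, Fin.sum_univ_one, Real.sqrt_sq (le_of_lt hy)]
      exact interior_maximal hsub hopen (by norm_num [hy₀_def])
    rw [frontier_eq_closure_inter_closure, closure_compl] at hfr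
    exact hfr.2 hint
  -- main case : 2 ≤ K
  have hGrank : (Mtᵀ * Mt).rank = K := by rw [Matrix.rank_transpose_mul_self, hrM]
  set G : Matrix (Fin K) (Fin K) ℝ := Mtᵀ * Mt with hG_def
  have hGunit : IsUnit G := aux_isUnit G hGrank
  have hGdet : IsUnit G.det := (Matrix.isUnit_iff_isUnit_det G).mp hGunit
  set L : Matrix (Fin K) (Fin I) ℝ := G⁻¹ * Mtᵀ with hL_def
  have hLMt : L * Mt = 1 := by
    rw [hL_def, Matrix.mul_assoc, ← hG_def, Matrix.nonsing_inv_mul G hGdet]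
  have hHsrank : Hs.rank = K := by
    have h1 : Ht = L * (Mt * Ht) := by rw [← Matrix.mul_assoc, hLMt, Matrix.one_mul]
    have h2 : Ht.rank ≤ Hs.rank := by
      calc Ht.rank ≤ (Mt * Ht).rank := by
            conv_lhs => rw [h1]
            exact Matrix.rank_mul_le_right L (Mt * Ht)
        _ = (Ms * Hs).rank := by rw [← hX, hXs]
        _ ≤ Hs.rank := Matrix.rank_mul_le_right Ms Hs
    have h3 : Hs.rank ≤ K := by
      have := Matrix.rank_le_card_height Hs
      simpa using this
    omega
  set W : Matrix (Fin K) (Fin K) ℝ := Hs * Hsᵀ with hW_def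
  have hWrank : W.rank = K := by rw [hW_def, Matrix.rank_self_mul_transpose, hHsrank]
  have hWdet : IsUnit W.det := (Matrix.isUnit_iff_isUnit_det W).mp (aux_isUnit W hWrank)
  set S : Matrix (Fin J) (Fin K) ℝ := Hsᵀ * W⁻¹ with hS_def
  have hHsS : Hs * S = 1 := by
    rw [hS_def, ← Matrix.mul_assoc, ← hW_def, Matrix.mul_nonsing_inv W hWdet]
  set A : Matrix (Fin K) (Fin K) ℝ := L * Ms with hA_def
  have hMs_fact : Ms = Mt * Ht * S := by
    calc Ms = Ms * (Hs * S) := by rw [hHsS, Matrix.mul_one]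
      _ = (Ms * Hs) * S := by rw [Matrix.mul_assoc]
      _ = Mt * Ht * S := by rw [← hXs, hX]
  have hMtA : Mt * A = Ms := by
    rw [hA_def, hMs_fact]
    calc Mt * (L * (Mt * Ht * S)) = Mt * (L * Mt * (Ht * S)) := by
          simp only [Matrix.mul_assoc]
      _ = Mt * (Ht * S) := by rw [hLMt, Matrix.one_mul]
      _ = Mt * Ht * S := by rw [Matrix.mul_assoc]
  have hAHs : A * Hs = Ht := by
    calc A * Hs = L * (Ms * Hs) := by rw [hA_def, Matrix.mul_assoc]
      _ = L * (Mt * Ht) := by rw [← hXs, hX]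
      _ = Ht := by rw [← Matrix.mul_assoc, hLMt, Matrix.one_mul]
  have hAsum : ∀ j, ∑ k, A k j = 1 := by
    set c : Fin K → ℝ := fun m => (∑ k, A k m) - 1 with hc_def
    have hcHs : ∀ j', ∑ m, c m * Hs m j' = 0 := by
      intro j'
      have e1 : ∑ m, (∑ k, A k m) * Hs m j' = ∑ k, Ht k j' := by
        rw [← hAHs]
        simp_rw [Finset.sum_mul, Matrix.mul_apply]
        rw [Finset.sum_comm]
      have e2 : ∑ m, (c m) * Hs m j' = ∑ m, (∑ k, A k m) * Hs m j' - ∑ m, Hs m j' := by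
        simp_rw [hc_def, sub_mul, one_mul, Finset.sum_sub_distrib]
      rw [e2, e1, hHtsum j', hHssum j']
      ring
    have hvec : c ᵥ* W = 0 := by
      rw [hW_def, ← Matrix.vecMul_vecMul]
      have : c ᵥ* Hs = 0 := by
        ext j'
        simpa [Matrix.vecMul, dotProduct] using hcHs j'
      rw [this, Matrix.zero_vecMul]
    have hc0 : c = 0 := by
      have := congrArg (fun v => v ᵥ* W⁻¹) hvec
      simpa [Matrix.vecMul_vecMul, Matrix.mul_nonsing_inv W hWdet, Matrix.zero_vecMul] using this
    intro j
    have := congrFun hc0 j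
    simp only [hc_def, Pi.zero_apply] at this
    linarith
  -- determinant bound
  have hopt' := hopt Mt Ht hMtnn hHtnn hX hHtsum
  have hMsTMs : Msᵀ * Ms = Aᵀ * G * A := by
    rw [← hMtA, hG_def]
    simp only [Matrix.transpose_mul, Matrix.mul_assoc]
  have hdetMs : (Msᵀ * Ms).det = A.det ^ 2 * G.det := by
    rw [hMsTMs, Matrix.det_mul, Matrix.det_mul, Matrix.det_transpose]
    ring
  have hGpos : 0 < G.det :=
    lt_of_le_of_ne (aux_det_nonneg G (hG_def ▸ aux_psd Mt)) (Ne.symm hGdet.ne_zero)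
  have hdet2 : 1 ≤ A.det ^ 2 := by
    have h1 : G.det ≤ (Msᵀ * Ms).det := hopt'
    rw [hdetMs] at h1
    nlinarith [h1, hGpos]
  -- the columns of A
  have hcolnn : ∀ j i, 0 ≤ ∑ k, Mt i k * A k j := by
    intro j i
    have h := hMsnn i j
    rw [← hMtA, Matrix.mul_apply] at h
    exact h
  have hsqle : ∀ j, Real.sqrt (∑ k, (A k j) ^ 2) ≤ 1 := by
    intro j
    have := aux_dual Mt hK2 hSSC1 (fun k => A k j) (hcolnn j)
    rw [hAsum j] at this
    exact this
  have hq1 : ∀ j, ∑ k, (A k j) ^ 2 = 1 := aux_colnorm hK2 A hdet2 hAsum hsqle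
  -- apply SSC2 to each column
  have hcolfact : ∀ j, ∃ k0 : Fin K, ∀ m, A m j = if m = k0 then 1 else 0 := by
    intro j
    have hmem : (fun k => A k j) ∈
        {y : Fin K → ℝ | ∀ i, 0 ≤ ∑ k, Mt i k * y k} ∩
        frontier {y : Fin K → ℝ | Real.sqrt (∑ i, (y i) ^ 2) ≤ ∑ i, y i} :=
      ⟨hcolnn j, aux_frontier hK2 _ (hq1 j) (hAsum j)⟩
    rw [hSSC2] at hmem
    obtain ⟨α, hα0, k0, hk0⟩ := hmem
    have hsum : α = 1 := by
      have := hAsum j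
      have e : ∀ k, A k j = α * (if k = k0 then (1:ℝ) else 0) := by
        intro k
        have := congrFun hk0 k
        simpa [Pi.single_apply] using this
      rw [Finset.sum_congr rfl (fun k _ => e k)] at this
      rw [← Finset.mul_sum, Finset.sum_ite_eq' Finset.univ k0 (fun _ => (1:ℝ))] at this
      simpa using this
    refine ⟨k0, fun m => ?_⟩
    have := congrFun hk0 m
    simpa [Pi.single_apply, hsum] using this
  choose κ hκ using hcolfact
  have hdetA_ne : A.det ≠ 0 := by
    intro h
    rw [h] at hdet2
    norm_num at hdet2
  have hκinj : Function.Injective κ := by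
    intro j1 j2 heq
    by_contra hne
    apply hdetA_ne
    apply Matrix.det_zero_of_column_eq hne
    intro m
    rw [hκ j1 m, hκ j2 m, heq]
  set σ : Equiv.Perm (Fin K) := Equiv.ofBijective κ (Finite.injective_iff_bijective.mp hκinj)
    with hσ_def
  have hσapp : ∀ j, σ j = κ j := fun j => rfl
  have hAtA : Aᵀ * A = 1 := by
    ext j j'
    rw [Matrix.mul_apply, Matrix.one_apply]
    simp only [Matrix.transpose_apply]
    have e : ∀ m, A m j * A m j' =
        if m = κ j then (if κ j = κ j' then (1:ℝ) else 0) else 0 := by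
      intro m
      rw [hκ j m, hκ j' m]
      by_cases h1 : m = κ j
      · subst h1
        simp
      · simp [h1]
    rw [Finset.sum_congr rfl (fun m _ => e m),
      Finset.sum_ite_eq' Finset.univ (κ j) (fun _ => if κ j = κ j' then (1:ℝ) else 0)]
    simp only [Finset.mem_univ, if_true]
    by_cases hjj : j = j'
    · simp [hjj]
    · have : κ j ≠ κ j' := fun h => hjj (hκinj h)
      simp [hjj, this]
  refine ⟨A, ⟨σ, ?_⟩, hMtA.symm, ?_⟩
  · intro i j
    rw [hκ j i, hσapp j]
    by_cases h : κ j = i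
    · rw [if_pos h.symm, if_pos h]
    · rw [if_neg (fun hh => h hh.symm), if_neg h]
  · rw [← hAHs, ← Matrix.mul_assoc, hAtA, Matrix.one_mul]
end
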